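/- arXiv:quant-ph/0606030 — 4 statements merged into one kernel-verified Lean document; each statement's English description precedes it below -/
import Mathlib

section
/- Let d ≥ 1 and n ≥ 1. Let (ψ_x)_{x ∈ Fin (2^n)} be a family of unit vectors in ℂ^d ⊗ ℂ^d such that every ψ_x admits a Schmidt decomposition with the same Schmidt coefficients λ : Fin d → ℝ (each relative to possibly different orthonormal bases). For each x let {E_{x,1}, …, E_{x,m_x}} be a Kraus set on ℂ^d. Then ∑_{x} ∑_{i=1}^{m_x} |⟨ψ_x, (E_{x,i} ⊗ 1) Φ_ME⟩|² ≤ (2^n / d) · (∑_{a} √(λ_a))². (This is Theorem 1 of the paper: the exact upper bound ∑_x p̃_x ≤ (2^n/d)(∑_a λ_a^{1/2})² on the binding condition of a group covariant quantum string commitment protocol, after reduction of Alice's cheating strategy to attacks on the maximally entangled state.) -/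
open Matrix BigOperators
open scoped ComplexConjugate Kronecker

noncomputable section

/-- The standard inner product on `ℂ^I` (functions `I → ℂ`), conjugate-linear in the
first argument. -/
def cinner {I : Type*} [Fintype I] (v w : I → ℂ) : ℂ := ∑ a, conj (v a) * w a

/-- The action of the Kronecker product `A ⊗ B` on `ℂ^d ⊗ ℂ^d`, identified with
the space of functions `Fin d × Fin d → ℂ`. -/
def tensorOp {d : ℕ} (A B : Matrix (Fin d) (Fin d) ℂ) (ψ : Fin d × Fin d → ℂ) :
    Fin d × Fin d → ℂ :=
  fun p => ∑ q : Fin d × Fin d, A p.1 q.1 * B p.2 q.2 * ψ q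

/-- The maximally entangled state `Φ_ME`, with `Φ_ME (a, b) = 1/√d` if `a = b` and `0`
otherwise. -/
def PhiME (d : ℕ) : Fin d × Fin d → ℂ :=
  fun p => if p.1 = p.2 then ((1 / Real.sqrt d : ℝ) : ℂ) else 0

/-- `conj z * z` is the squared norm. -/
lemma conj_mul_self' (z : ℂ) : conj z * z = ((‖z‖ ^ 2 : ℝ) : ℂ) := by
  rw [Complex.conj_mul']; norm_cast

/-- Cauchy–Schwarz for `cinner`. -/
lemma cinner_cs {I : Type*} [Fintype I] (v w : I → ℂ) :
    ‖cinner v w‖ ^ 2 ≤ (∑ a, ‖v a‖ ^ 2) * (∑ a, ‖w a‖ ^ 2) := by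
  let v' : EuclideanSpace ℂ I := WithLp.toLp 2 v
  let w' : EuclideanSpace ℂ I := WithLp.toLp 2 w
  have h1 : cinner v w = inner (𝕜 := ℂ) v' w' := by
    simp [cinner, PiLp.inner_apply, RCLike.inner_apply, v', w', mul_comm]
  have h2 := norm_inner_le_norm (𝕜 := ℂ) v' w'
  rw [EuclideanSpace.norm_eq, EuclideanSpace.norm_eq] at h2
  rw [h1]
  calc ‖inner (𝕜 := ℂ) v' w'‖ ^ 2
      ≤ (Real.sqrt (∑ a, ‖v' a‖ ^ 2) * Real.sqrt (∑ a, ‖w' a‖ ^ 2)) ^ 2 := by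
        apply pow_le_pow_left₀ (norm_nonneg _) h2
    _ = (∑ a, ‖v a‖ ^ 2) * (∑ a, ‖w a‖ ^ 2) := by
        rw [mul_pow, Real.sq_sqrt (by positivity), Real.sq_sqrt (by positivity)]

/-- A unit vector for `cinner` has unit sum of squared coordinate norms. -/
lemma sum_sq_norm_of_cinner_one {I : Type*} [Fintype I] {v : I → ℂ}
    (h : cinner v v = 1) : ∑ a, ‖v a‖ ^ 2 = 1 := by
  have hC : ((∑ a, ‖v a‖ ^ 2 : ℝ) : ℂ) = 1 := by
    rw [← h, cinner, Complex.ofReal_sum]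
    exact (Finset.sum_congr rfl fun a _ => (conj_mul_self' (v a))).symm
  exact_mod_cast hC

/-- Evaluation of `(A ⊗ 1)` on the maximally entangled state. -/
lemma tensorOp_one_phiME {d : ℕ} (A : Matrix (Fin d) (Fin d) ℂ) (p : Fin d × Fin d) :
    tensorOp A 1 (PhiME d) p = ((1 / Real.sqrt d : ℝ) : ℂ) * A p.1 p.2 := by
  simp only [tensorOp, PhiME, Matrix.one_apply, Fintype.sum_prod_type]
  simp only [mul_ite, ite_mul, one_mul, zero_mul, mul_zero, mul_one,
    Finset.sum_ite_eq, Finset.sum_ite_eq', Finset.mem_univ, if_true]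
  rw [mul_comm]

/-- Theorem 1 of the paper: the exact upper bound on the binding condition of a group
covariant QSC protocol, `∑_x p̃_x ≤ (2^n/d) (∑_a λ_a^{1/2})²`, after reduction of Alice's
cheating strategy to attacks on the maximally entangled state. -/
theorem binding_upper_bound (d n : ℕ) (hd : 1 ≤ d) (hn : 1 ≤ n)
    (lam : Fin d → ℝ) (hlam : ∀ a, 0 ≤ lam a) (hlamsum : ∑ a, lam a = 1)
    (ψ : Fin (2 ^ n) → Fin d × Fin d → ℂ)
    (ν μ : Fin (2 ^ n) → Fin d → Fin d → ℂ)
    (hν : ∀ x a b, cinner (ν x a) (ν x b) = if a = b then 1 else 0)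
    (hμ : ∀ x a b, cinner (μ x a) (μ x b) = if a = b then 1 else 0)
    (hψ : ∀ x, ψ x =
      fun p => ∑ a, ((Real.sqrt (lam a) : ℝ) : ℂ) * ν x a p.1 * μ x a p.2)
    (m : Fin (2 ^ n) → ℕ)
    (E : ∀ x, Fin (m x) → Matrix (Fin d) (Fin d) ℂ)
    (hE : ∀ x, ∑ i, (E x i)ᴴ * E x i = 1) :
    ∑ x, ∑ i, ‖cinner (ψ x) (tensorOp (E x i) 1 (PhiME d))‖ ^ 2 ≤
      ((2 ^ n : ℝ) / d) * (∑ a, Real.sqrt (lam a)) ^ 2 := by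
  have hd0 : (0 : ℝ) < d := by exact_mod_cast hd
  set L : ℝ := ∑ a, Real.sqrt (lam a) with hL
  have hL0 : 0 ≤ L := Finset.sum_nonneg fun a _ => Real.sqrt_nonneg _
  -- key per-x bound
  have key : ∀ x, ∑ i, ‖cinner (ψ x) (tensorOp (E x i) 1 (PhiME d))‖ ^ 2 ≤
      (1 / d) * L ^ 2 := by
    intro x
    -- vectors u a i = E_i applied to conj (μ x a)
    set u : Fin d → Fin (m x) → Fin d → ℂ :=
      fun a i b => ∑ c', E x i b c' * conj (μ x a c') with hu
    -- value of the inner product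
    have hval : ∀ i, cinner (ψ x) (tensorOp (E x i) 1 (PhiME d)) =
        ((1 / Real.sqrt d : ℝ) : ℂ) *
          ∑ a, ((Real.sqrt (lam a) : ℝ) : ℂ) * cinner (ν x a) (u a i) := by
      intro i
      rw [cinner]
      calc ∑ p, conj (ψ x p) * tensorOp (E x i) 1 (PhiME d) p
          = ∑ p : Fin d × Fin d, ∑ a, ((1 / Real.sqrt d : ℝ) : ℂ) *
              (((Real.sqrt (lam a) : ℝ) : ℂ) *
                (conj (ν x a p.1) * (E x i p.1 p.2 * conj (μ x a p.2)))) := by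
            refine Finset.sum_congr rfl fun p _ => ?_
            rw [tensorOp_one_phiME, hψ x]
            simp only [map_sum, _root_.map_mul, Complex.conj_ofReal, Finset.sum_mul]
            refine Finset.sum_congr rfl fun a _ => by ring
        _ = ∑ a, ((1 / Real.sqrt d : ℝ) : ℂ) *
              (((Real.sqrt (lam a) : ℝ) : ℂ) * cinner (ν x a) (u a i)) := by
            rw [Finset.sum_comm]
            refine Finset.sum_congr rfl fun a _ => ?_
            simp only [cinner, hu, Fintype.sum_prod_type, Finset.mul_sum]
        _ = ((1 / Real.sqrt d : ℝ) : ℂ) *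
              ∑ a, ((Real.sqrt (lam a) : ℝ) : ℂ) * cinner (ν x a) (u a i) := by
            rw [Finset.mul_sum]
    -- Kraus identity entrywise
    have hEentry : ∀ c c' : Fin d,
        (∑ q : Fin (m x) × Fin d, conj (E x q.1 q.2 c) * E x q.1 q.2 c') =
          if c = c' then 1 else 0 := by
      intro c c'
      have h : (∑ i, (E x i)ᴴ * E x i) c c' = (1 : Matrix (Fin d) (Fin d) ℂ) c c' := by
        rw [hE x]
      simp only [Matrix.sum_apply, Matrix.mul_apply, Matrix.conjTranspose_apply,
        Matrix.one_apply] at h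
      rw [Fintype.sum_prod_type]
      simpa using h
    -- ∑ i ∑ b ‖u a i b‖² = 1
    have hUsum : ∀ a, ∑ i, ∑ b, ‖u a i b‖ ^ 2 = 1 := by
      intro a
      have hC : ((∑ i, ∑ b, ‖u a i b‖ ^ 2 : ℝ) : ℂ) = 1 := by
        calc ((∑ i, ∑ b, ‖u a i b‖ ^ 2 : ℝ) : ℂ)
            = ∑ q : Fin (m x) × Fin d, conj (u a q.1 q.2) * u a q.1 q.2 := by
              push_cast
              rw [Fintype.sum_prod_type]
              exact Finset.sum_congr rfl fun i _ => Finset.sum_congr rfl fun b _ => by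
                rw [conj_mul_self']; norm_cast
          _ = ∑ q : Fin (m x) × Fin d, ∑ p : Fin d × Fin d,
                (μ x a p.1 * conj (μ x a p.2)) *
                  (conj (E x q.1 q.2 p.1) * E x q.1 q.2 p.2) := by
              refine Finset.sum_congr rfl fun q _ => ?_
              rw [Fintype.sum_prod_type]
              simp only [hu, map_sum, _root_.map_mul, Complex.conj_conj]
              rw [Finset.sum_mul_sum]
              exact Finset.sum_congr rfl fun c _ => Finset.sum_congr rfl fun c' _ => by ring
          _ = ∑ p : Fin d × Fin d, (μ x a p.1 * conj (μ x a p.2)) *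
                ∑ q : Fin (m x) × Fin d, conj (E x q.1 q.2 p.1) * E x q.1 q.2 p.2 := by
              rw [Finset.sum_comm]
              exact Finset.sum_congr rfl fun p _ => (Finset.mul_sum _ _ _).symm
          _ = ∑ p : Fin d × Fin d, (μ x a p.1 * conj (μ x a p.2)) *
                (if p.1 = p.2 then 1 else 0) := by
              exact Finset.sum_congr rfl fun p _ => by rw [hEentry p.1 p.2]
          _ = ∑ c, μ x a c * conj (μ x a c) := by
              simp [Fintype.sum_prod_type, mul_ite, Finset.sum_ite_eq]
          _ = cinner (μ x a) (μ x a) := by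
              rw [cinner]; exact Finset.sum_congr rfl fun c _ => mul_comm _ _
          _ = 1 := by simpa using hμ x a a
      exact_mod_cast hC
    -- per-i bound on inner Schmidt coefficients
    have hSbound : ∀ a i, ‖cinner (ν x a) (u a i)‖ ^ 2 ≤ ∑ b, ‖u a i b‖ ^ 2 := by
      intro a i
      have hν1 : ∑ b, ‖ν x a b‖ ^ 2 = 1 :=
        sum_sq_norm_of_cinner_one (by simpa using hν x a a)
      have := cinner_cs (ν x a) (u a i)
      rwa [hν1, one_mul] at this
    -- per-i bound
    have hper : ∀ i, ‖cinner (ψ x) (tensorOp (E x i) 1 (PhiME d))‖ ^ 2 ≤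
        (1 / d) * (L * ∑ a, Real.sqrt (lam a) * ‖cinner (ν x a) (u a i)‖ ^ 2) := by
      intro i
      rw [hval i]
      have hnorm : ‖((1 / Real.sqrt d : ℝ) : ℂ) *
          ∑ a, ((Real.sqrt (lam a) : ℝ) : ℂ) * cinner (ν x a) (u a i)‖ =
          (1 / Real.sqrt d) * ‖∑ a, ((Real.sqrt (lam a) : ℝ) : ℂ) * cinner (ν x a) (u a i)‖ := by
        rw [norm_mul, Complex.norm_real, Real.norm_eq_abs,
          abs_of_nonneg (by positivity)]
      rw [hnorm, mul_pow]
      have hcoef : (1 / Real.sqrt d) ^ 2 = 1 / d := by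
        rw [div_pow, one_pow, Real.sq_sqrt hd0.le]
      rw [hcoef]
      refine mul_le_mul_of_nonneg_left ?_ (by positivity)
      calc ‖∑ a, ((Real.sqrt (lam a) : ℝ) : ℂ) * cinner (ν x a) (u a i)‖ ^ 2
          ≤ (∑ a, Real.sqrt (lam a) * ‖cinner (ν x a) (u a i)‖) ^ 2 := by
            apply pow_le_pow_left₀ (norm_nonneg _)
            refine le_trans (norm_sum_le _ _) (le_of_eq ?_)
            refine Finset.sum_congr rfl fun a _ => ?_
            rw [norm_mul, Complex.norm_real, Real.norm_eq_abs,
              abs_of_nonneg (Real.sqrt_nonneg _)]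
        _ ≤ L * ∑ a, Real.sqrt (lam a) * ‖cinner (ν x a) (u a i)‖ ^ 2 := by
            refine Finset.sum_sq_le_sum_mul_sum_of_sq_eq_mul _
              (fun a _ => Real.sqrt_nonneg _)
              (fun a _ => mul_nonneg (Real.sqrt_nonneg _) (sq_nonneg _))
              (fun a _ => by ring)
    -- sum over i
    calc ∑ i, ‖cinner (ψ x) (tensorOp (E x i) 1 (PhiME d))‖ ^ 2
        ≤ ∑ i, (1 / d) * (L * ∑ a, Real.sqrt (lam a) * ‖cinner (ν x a) (u a i)‖ ^ 2) :=
          Finset.sum_le_sum fun i _ => hper i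
      _ = (1 / d) * (L * ∑ a, Real.sqrt (lam a) * ∑ i, ‖cinner (ν x a) (u a i)‖ ^ 2) := by
          rw [← Finset.mul_sum, ← Finset.mul_sum, Finset.sum_comm]
          congr 2
          exact Finset.sum_congr rfl fun a _ => (Finset.mul_sum _ _ _).symm
      _ ≤ (1 / d) * (L * ∑ a, Real.sqrt (lam a) * 1) := by
          refine mul_le_mul_of_nonneg_left
            (mul_le_mul_of_nonneg_left (Finset.sum_le_sum fun a _ => ?_) hL0)
            (by positivity)
          refine mul_le_mul_of_nonneg_left ?_ (Real.sqrt_nonneg _)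
          calc ∑ i, ‖cinner (ν x a) (u a i)‖ ^ 2
              ≤ ∑ i, ∑ b, ‖u a i b‖ ^ 2 := Finset.sum_le_sum fun i _ => hSbound a i
            _ = 1 := hUsum a
      _ = (1 / d) * L ^ 2 := by simp only [mul_one, ← hL]; ring
  -- sum over x
  calc ∑ x, ∑ i, ‖cinner (ψ x) (tensorOp (E x i) 1 (PhiME d))‖ ^ 2
      ≤ ∑ _x : Fin (2 ^ n), (1 / d) * L ^ 2 := Finset.sum_le_sum fun x _ => key x
    _ = ((2 ^ n : ℝ) / d) * L ^ 2 := by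
        rw [Finset.sum_const, Finset.card_univ, Fintype.card_fin]
        push_cast
        ring
end
end

section
/- Let d ≥ 1 and let ψ ∈ ℂ^d ⊗ ℂ^d be a unit vector with a Schmidt decomposition with Schmidt coefficients λ : Fin d → ℝ. Then for every Kraus set {E_1, …, E_m} on ℂ^d, ∑_{i=1}^{m} |⟨ψ, (E_i ⊗ 1) Φ_ME⟩|² ≤ (1/d) · (∑_{a} √(λ_a))². (This is the single-string bound p̃_0 ≤ (1/d)(∑_a λ_a^{1/2})² established in the proof of Theorem 1.) -/
open Matrix BigOperators
open scoped ComplexConjugate Kronecker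

noncomputable section

lemma cinner_eq {d : ℕ} (v w : Fin d → ℂ) :
    cinner v w = @inner ℂ (EuclideanSpace ℂ (Fin d)) _ (WithLp.toLp 2 v) (WithLp.toLp 2 w) := by
  simp [cinner, PiLp.inner_apply, RCLike.inner_apply, mul_comm]

lemma cinner_cs_s1 {d : ℕ} (v w : Fin d → ℂ) :
    ‖cinner v w‖ ^ 2 ≤ (cinner v v).re * (cinner w w).re := by
  rw [cinner_eq, cinner_eq, cinner_eq]
  have h := norm_inner_le_norm (𝕜 := ℂ) (E := EuclideanSpace ℂ (Fin d)) (WithLp.toLp 2 v) (WithLp.toLp 2 w)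
  have hv : ‖(WithLp.toLp 2 v : EuclideanSpace ℂ (Fin d))‖ ^ 2 = RCLike.re (inner ℂ (WithLp.toLp 2 v : EuclideanSpace ℂ (Fin d)) (WithLp.toLp 2 v)) := norm_sq_eq_re_inner _
  have hw : ‖(WithLp.toLp 2 w : EuclideanSpace ℂ (Fin d))‖ ^ 2 = RCLike.re (inner ℂ (WithLp.toLp 2 w : EuclideanSpace ℂ (Fin d)) (WithLp.toLp 2 w)) := norm_sq_eq_re_inner _
  simp only [← RCLike.re_to_complex]
  rw [← hv, ← hw]
  nlinarith [h, norm_nonneg (@inner ℂ (EuclideanSpace ℂ (Fin d)) _ (WithLp.toLp 2 v) (WithLp.toLp 2 w)),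
    norm_nonneg (E := EuclideanSpace ℂ (Fin d)) (WithLp.toLp 2 v), norm_nonneg (E := EuclideanSpace ℂ (Fin d)) (WithLp.toLp 2 w)]

lemma tensorOp_one_PhiME {d : ℕ} (A : Matrix (Fin d) (Fin d) ℂ) (p : Fin d × Fin d) :
    tensorOp A 1 (PhiME d) p = ((1/Real.sqrt d : ℝ) : ℂ) * A p.1 p.2 := by
  simp only [tensorOp, PhiME, Matrix.one_apply]
  rw [Fintype.sum_prod_type]
  simp [mul_ite, ite_mul, Finset.sum_ite_eq, Finset.sum_ite_eq', mul_comm]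

lemma key_expand {d : ℕ} (lam : Fin d → ℝ) (ν μ : Fin d → Fin d → ℂ)
    (A : Matrix (Fin d) (Fin d) ℂ) :
    cinner (fun p => ∑ a, ((Real.sqrt (lam a) : ℝ) : ℂ) * ν a p.1 * μ a p.2)
        (tensorOp A 1 (PhiME d))
      = ((1/Real.sqrt d : ℝ) : ℂ) *
        ∑ a, ((Real.sqrt (lam a) : ℝ) : ℂ) *
          cinner (ν a) (A.mulVec fun q => conj (μ a q)) := by
  simp only [cinner, tensorOp_one_PhiME, map_sum, _root_.map_mul, Complex.conj_ofReal,
    Matrix.mulVec, dotProduct, Finset.mul_sum, Finset.sum_mul]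
  rw [Fintype.sum_prod_type]
  conv_lhs => enter [2, p1]; rw [Finset.sum_comm]
  rw [Finset.sum_comm]
  apply Finset.sum_congr rfl
  intro a _
  apply Finset.sum_congr rfl
  intro p1 _
  apply Finset.sum_congr rfl
  intro p2 _
  ring

lemma cinner_eq_dot {d : ℕ} (v w : Fin d → ℂ) : cinner v w = star v ⬝ᵥ w := by
  simp [cinner, dotProduct, Pi.star_apply, RCLike.star_def]

lemma cinner_mulVec_self {d : ℕ} (A : Matrix (Fin d) (Fin d) ℂ) (x : Fin d → ℂ) :
    cinner (A.mulVec x) (A.mulVec x) = cinner x ((Aᴴ * A).mulVec x) := by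
  rw [cinner_eq_dot, cinner_eq_dot, Matrix.star_mulVec, ← Matrix.dotProduct_mulVec,
    Matrix.mulVec_mulVec]


/-- The single-string bound `p̃_0 ≤ (1/d)(∑_a λ_a^{1/2})²` established in the proof of
Theorem 1. -/
theorem single_string_bound (d : ℕ) (hd : 1 ≤ d)
    (lam : Fin d → ℝ) (hlam : ∀ a, 0 ≤ lam a) (hlamsum : ∑ a, lam a = 1)
    (ψ : Fin d × Fin d → ℂ)
    (ν μ : Fin d → Fin d → ℂ)
    (hν : ∀ a b, cinner (ν a) (ν b) = if a = b then 1 else 0)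
    (hμ : ∀ a b, cinner (μ a) (μ b) = if a = b then 1 else 0)
    (hψ : ψ = fun p => ∑ a, ((Real.sqrt (lam a) : ℝ) : ℂ) * ν a p.1 * μ a p.2)
    (m : ℕ) (E : Fin m → Matrix (Fin d) (Fin d) ℂ)
    (hE : ∑ i, (E i)ᴴ * E i = 1) :
    ∑ i, ‖cinner ψ (tensorOp (E i) 1 (PhiME d))‖ ^ 2 ≤
      (1 / d : ℝ) * (∑ a, Real.sqrt (lam a)) ^ 2 := by
  have hd0 : (0:ℝ) < d := by exact_mod_cast hd
  set c : Fin m → Fin d → ℂ :=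
    fun i a => cinner (ν a) ((E i).mulVec fun q => conj (μ a q)) with hc
  set w : Fin m → Fin d → Fin d → ℂ :=
    fun i a => (E i).mulVec fun q => conj (μ a q) with hw
  -- Step 1: norm identity
  have h1 : ∀ i, ‖cinner ψ (tensorOp (E i) 1 (PhiME d))‖ ^ 2
      = (1/d) * ‖∑ a, ((Real.sqrt (lam a) : ℝ) : ℂ) * c i a‖ ^ 2 := by
    intro i
    rw [hψ, key_expand, norm_mul]
    rw [Complex.norm_real, Real.norm_eq_abs,
      abs_of_nonneg (by positivity : (0:ℝ) ≤ 1 / Real.sqrt d)]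
    rw [mul_pow, div_pow, one_pow, Real.sq_sqrt hd0.le]
  -- Step 2: per-a per-i bound ‖c i a‖² ≤ (cinner (w i a) (w i a)).re
  have h2 : ∀ i a, ‖c i a‖ ^ 2 ≤ (cinner (w i a) (w i a)).re := by
    intro i a
    have := cinner_cs_s1 (ν a) (w i a)
    rw [hν a a] at this
    simpa using this
  -- Step 3: ∑ i (cinner (w i a) (w i a)).re = 1
  have h3 : ∀ a, ∑ i, (cinner (w i a) (w i a)).re = 1 := by
    intro a
    have hsum : ∑ i, cinner (w i a) (w i a) = 1 := by
      have : ∀ i, cinner (w i a) (w i a)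
          = cinner (fun q => conj (μ a q)) (((E i)ᴴ * E i).mulVec fun q => conj (μ a q)) := by
        intro i; rw [hw]; exact cinner_mulVec_self _ _
      simp only [this]
      have hlin : ∑ i, cinner (fun q => conj (μ a q)) (((E i)ᴴ * E i).mulVec fun q => conj (μ a q))
          = cinner (fun q => conj (μ a q)) ((∑ i, (E i)ᴴ * E i).mulVec fun q => conj (μ a q)) := by
        simp only [cinner, Matrix.mulVec, dotProduct, Finset.sum_apply,
          Matrix.sum_apply, Finset.sum_mul, Finset.mul_sum]
        rw [Finset.sum_comm]
        apply Finset.sum_congr rfl; intro q _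
        rw [Finset.sum_comm]
      rw [hlin, hE, Matrix.one_mulVec]
      have : cinner (fun q => conj (μ a q)) (fun q => conj (μ a q)) = conj (cinner (μ a) (μ a)) := by
        simp [cinner, map_sum, mul_comm]
      rw [this, hμ a a]
      simp
    rw [← Complex.re_sum, hsum, Complex.one_re]
  -- Step 4: Cauchy–Schwarz for the weighted sum
  have h4 : ∀ i, ‖∑ a, ((Real.sqrt (lam a) : ℝ) : ℂ) * c i a‖ ^ 2
      ≤ (∑ a, Real.sqrt (lam a)) * (∑ a, Real.sqrt (lam a) * ‖c i a‖ ^ 2) := by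
    intro i
    have hb : ‖∑ a, ((Real.sqrt (lam a) : ℝ) : ℂ) * c i a‖
        ≤ ∑ a, Real.sqrt (lam a) * ‖c i a‖ := by
      refine (norm_sum_le _ _).trans ?_
      apply Finset.sum_le_sum; intro a _
      rw [norm_mul, Complex.norm_real, Real.norm_eq_abs,
        abs_of_nonneg (Real.sqrt_nonneg _)]
    have hcs := Finset.sum_sq_le_sum_mul_sum_of_sq_eq_mul Finset.univ
      (r := fun a => Real.sqrt (lam a) * ‖c i a‖)
      (f := fun a => Real.sqrt (lam a))
      (g := fun a => Real.sqrt (lam a) * ‖c i a‖ ^ 2)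
      (fun a _ => Real.sqrt_nonneg _) (fun a _ => by positivity)
      (fun a _ => by rw [mul_pow, Real.sq_sqrt (hlam a), ← mul_assoc, Real.mul_self_sqrt (hlam a)])
    calc ‖∑ a, ((Real.sqrt (lam a) : ℝ) : ℂ) * c i a‖ ^ 2
        ≤ (∑ a, Real.sqrt (lam a) * ‖c i a‖) ^ 2 := by
          apply pow_le_pow_left₀ (norm_nonneg _) hb
      _ ≤ _ := hcs
  have h5 : ∀ a, ∑ i, ‖c i a‖ ^ 2 ≤ 1 := fun a =>
    (Finset.sum_le_sum fun i _ => h2 i a).trans_eq (h3 a)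
  calc ∑ i, ‖cinner ψ (tensorOp (E i) 1 (PhiME d))‖ ^ 2
      = ∑ i, (1/(d:ℝ)) * ‖∑ a, ((Real.sqrt (lam a) : ℝ) : ℂ) * c i a‖ ^ 2 :=
        Finset.sum_congr rfl fun i _ => h1 i
    _ ≤ ∑ i, (1/(d:ℝ)) *
          ((∑ a, Real.sqrt (lam a)) * ∑ a, Real.sqrt (lam a) * ‖c i a‖ ^ 2) :=
        Finset.sum_le_sum fun i _ => mul_le_mul_of_nonneg_left (h4 i) (by positivity)
    _ = (1/(d:ℝ)) * ((∑ a, Real.sqrt (lam a)) *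
          ∑ a, Real.sqrt (lam a) * ∑ i, ‖c i a‖ ^ 2) := by
        rw [← Finset.mul_sum, ← Finset.mul_sum]
        congr 2
        rw [Finset.sum_comm]
        apply Finset.sum_congr rfl; intro a _
        rw [Finset.mul_sum]
    _ ≤ (1/(d:ℝ)) * ((∑ a, Real.sqrt (lam a)) * ∑ a, Real.sqrt (lam a) * 1) := by
        apply mul_le_mul_of_nonneg_left _ (by positivity)
        apply mul_le_mul_of_nonneg_left _ (Finset.sum_nonneg fun a _ => Real.sqrt_nonneg _)
        exact Finset.sum_le_sum fun a _ =>
          mul_le_mul_of_nonneg_left (h5 a) (Real.sqrt_nonneg _)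
    _ = (1/(d:ℝ)) * (∑ a, Real.sqrt (lam a)) ^ 2 := by
        simp [mul_one, sq]
end
end

section
/- Let d ≥ 1 and let ψ ∈ ℂ^d ⊗ ℂ^d be a unit vector with a Schmidt decomposition with Schmidt coefficients λ : Fin d → ℝ. Then there exists a unitary matrix E ∈ M_d(ℂ) such that |⟨ψ, (E ⊗ 1) Φ_ME⟩|² = (1/d) · (∑_{a} √(λ_a))². (This is the equality case of Theorem 1: the bound on the binding condition is attained by Alice's attack using the maximally entangled state and a single Kraus operator with N¹_{ab} = δ_{ab}.) -/
open Matrix BigOperators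
open scoped ComplexConjugate Kronecker

noncomputable section

lemma rows_ortho_aux {d : ℕ} (f : Fin d → Fin d → ℂ)
    (hf : ∀ a b, cinner (f a) (f b) = if a = b then 1 else 0) :
    (Matrix.of fun a p => f a p) * (Matrix.of fun a p => f a p)ᴴ = 1 := by
  ext a b
  have h := hf a b
  simp only [cinner] at h
  simp only [Matrix.mul_apply, Matrix.of_apply, Matrix.conjTranspose_apply, Matrix.one_apply]
  have : ∑ x, f a x * star (f b x) = conj (∑ x, conj (f a x) * f b x) := by
    rw [map_sum]; exact Finset.sum_congr rfl fun p _ => by simp [mul_comm]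
  rw [this, h]
  split <;> simp

/-- The equality case of Theorem 1: the bound on the binding condition is attained by
Alice's attack using the maximally entangled state and a single unitary Kraus operator. -/
theorem binding_bound_attained (d : ℕ) (hd : 1 ≤ d)
    (lam : Fin d → ℝ) (hlam : ∀ a, 0 ≤ lam a) (hlamsum : ∑ a, lam a = 1)
    (ψ : Fin d × Fin d → ℂ)
    (ν μ : Fin d → Fin d → ℂ)
    (hν : ∀ a b, cinner (ν a) (ν b) = if a = b then 1 else 0)
    (hμ : ∀ a b, cinner (μ a) (μ b) = if a = b then 1 else 0)
    (hψ : ψ = fun p => ∑ a, ((Real.sqrt (lam a) : ℝ) : ℂ) * ν a p.1 * μ a p.2) :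
    ∃ E : Matrix (Fin d) (Fin d) ℂ, E ∈ Matrix.unitaryGroup (Fin d) ℂ ∧
      ‖cinner ψ (tensorOp E 1 (PhiME d))‖ ^ 2 =
        (1 / d : ℝ) * (∑ a, Real.sqrt (lam a)) ^ 2 := by
  classical
  set A : Matrix (Fin d) (Fin d) ℂ := Matrix.of (fun a p => ν a p) with hA
  set B : Matrix (Fin d) (Fin d) ℂ := Matrix.of (fun a p => μ a p) with hB
  have hAA : A * Aᴴ = 1 := rows_ortho_aux ν hν
  have hBB : B * Bᴴ = 1 := rows_ortho_aux μ hμ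
  refine ⟨Aᵀ * B, ?_, ?_⟩
  · rw [Matrix.mem_unitaryGroup_iff']
    have h1 : (Aᵀ)ᴴ * Aᵀ = 1 := by
      ext p q
      have h := Matrix.ext_iff.mpr hAA p q
      simp only [Matrix.mul_apply, Matrix.conjTranspose_apply, Matrix.transpose_apply,
        Matrix.one_apply] at h ⊢
      have hc : ∑ c, star (A p c) * A q c = conj (∑ c, A p c * star (A q c)) := by
        rw [map_sum]; exact Finset.sum_congr rfl fun c _ => by simp [mul_comm]
      rw [hc, h]
      split <;> simp
    have hBB' : Bᴴ * B = 1 := mul_eq_one_comm.mp hBB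
    calc star (Aᵀ * B) * (Aᵀ * B) = Bᴴ * ((Aᵀ)ᴴ * Aᵀ) * B := by
          simp [Matrix.star_eq_conjTranspose, Matrix.conjTranspose_mul, Matrix.mul_assoc]
      _ = 1 := by rw [h1, Matrix.mul_one, hBB']
  · set c0 : ℂ := ((1 / Real.sqrt d : ℝ) : ℂ) with hc0
    have htens : ∀ p : Fin d × Fin d, tensorOp (Aᵀ * B) 1 (PhiME d) p
        = (Aᵀ * B) p.1 p.2 * c0 := by
      intro p
      simp only [tensorOp, PhiME, Matrix.one_apply, Fintype.sum_prod_type]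
      rw [Finset.sum_comm]
      simp only [mul_ite, ite_mul, mul_zero, zero_mul, mul_one, Finset.sum_ite_eq,
        Finset.sum_ite_eq', Finset.mem_univ, if_true]
      rfl
    have key : ∀ a c : Fin d,
        ∑ p : Fin d × Fin d, (conj (ν a p.1) * ν c p.1) * (conj (μ a p.2) * μ c p.2)
          = if a = c then 1 else 0 := by
      intro a c
      have h1 := hν a c; have h2 := hμ a c
      simp only [cinner] at h1 h2
      calc ∑ p : Fin d × Fin d, (conj (ν a p.1) * ν c p.1) * (conj (μ a p.2) * μ c p.2)
          = (∑ x, conj (ν a x) * ν c x) * (∑ y, conj (μ a y) * μ c y) := by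
            rw [Finset.sum_mul_sum]
            exact Fintype.sum_prod_type _
        _ = if a = c then 1 else 0 := by rw [h1, h2]; split <;> simp
    have hval : cinner ψ (tensorOp (Aᵀ * B) 1 (PhiME d))
        = c0 * ∑ a, ((Real.sqrt (lam a) : ℝ) : ℂ) := by
      simp only [cinner, htens, hψ]
      have hEent : ∀ p : Fin d × Fin d, (Aᵀ * B) p.1 p.2 = ∑ c, ν c p.1 * μ c p.2 := by
        intro p
        simp [Matrix.mul_apply, hA, hB, Matrix.transpose_apply]
      calc ∑ p : Fin d × Fin d,
            conj (∑ a, ((Real.sqrt (lam a) : ℝ) : ℂ) * ν a p.1 * μ a p.2)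
              * ((Aᵀ * B) p.1 p.2 * c0)
          = ∑ p : Fin d × Fin d, ∑ a, ∑ c,
              (((Real.sqrt (lam a) : ℝ) : ℂ) *
                ((conj (ν a p.1) * ν c p.1) * (conj (μ a p.2) * μ c p.2))) * c0 := by
            refine Finset.sum_congr rfl fun p _ => ?_
            rw [hEent, map_sum, Finset.sum_mul]
            refine Finset.sum_congr rfl fun a _ => ?_
            rw [Finset.sum_mul, Finset.mul_sum]
            refine Finset.sum_congr rfl fun c _ => ?_
            simp only [_root_.map_mul, Complex.conj_ofReal]
            ring
        _ = ∑ a, ∑ c, (((Real.sqrt (lam a) : ℝ) : ℂ) *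
              (∑ p : Fin d × Fin d, (conj (ν a p.1) * ν c p.1) * (conj (μ a p.2) * μ c p.2))) * c0 := by
            rw [Finset.sum_comm]
            refine Finset.sum_congr rfl fun a _ => ?_
            rw [Finset.sum_comm]
            refine Finset.sum_congr rfl fun c _ => ?_
            rw [← Finset.sum_mul, ← Finset.mul_sum]
        _ = c0 * ∑ a, ((Real.sqrt (lam a) : ℝ) : ℂ) := by
            rw [Finset.mul_sum]
            refine Finset.sum_congr rfl fun a _ => ?_
            simp only [key, mul_ite, mul_one, mul_zero, ite_mul, zero_mul]
            rw [Finset.sum_ite_eq Finset.univ a fun _ => (((Real.sqrt (lam a) : ℝ) : ℂ)) * c0]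
            simp [mul_comm]
    rw [hval]
    have hdpos : (0:ℝ) < d := by exact_mod_cast Nat.lt_of_lt_of_le Nat.zero_lt_one hd
    have hd0 : (0:ℝ) < Real.sqrt d := Real.sqrt_pos.mpr hdpos
    have hsum : (∑ a, ((Real.sqrt (lam a) : ℝ) : ℂ)) = ((∑ a, Real.sqrt (lam a) : ℝ) : ℂ) := by
      push_cast; ring
    rw [hsum, hc0, ← Complex.ofReal_mul, Complex.norm_real, Real.norm_eq_abs, sq_abs,
      mul_pow, div_pow, one_pow, Real.sq_sqrt hdpos.le]
end
end

section
/- Let G be a finite group, D : G → M_d(ℂ) an irreducible unitary representation, and ψ ∈ ℂ^d a unit vector such that for every g ∈ G, |⟨ψ, D(g) ψ⟩| ∈ {0, 1}. Then there exist group elements g_1, …, g_d ∈ G such that (D(g_1)ψ, …, D(g_d)ψ) is an orthonormal basis of ℂ^d. (This is the 'classical' alternative of Theorem 2: if every overlap |⟨ψ_0|D(g)|ψ_0⟩|² is 0 or 1, then the commitment states are mutually orthogonal and the protocol is equivalent to a purely classical protocol in which all transactions are done in the computational basis.) -/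
open Matrix BigOperators
open scoped ComplexConjugate Kronecker

noncomputable section

lemma cinner_eq_inner {d : ℕ} (v w : Fin d → ℂ) :
    cinner v w = inner (𝕜 := ℂ) ((WithLp.equiv 2 (Fin d → ℂ)).symm v)
      ((WithLp.equiv 2 (Fin d → ℂ)).symm w) := by
  simp [cinner, PiLp.inner_apply, RCLike.inner_apply, mul_comm]

lemma cinner_unitary {d : ℕ} (A : Matrix (Fin d) (Fin d) ℂ)
    (hA : A ∈ Matrix.unitaryGroup (Fin d) ℂ)
    (x y : Fin d → ℂ) : cinner (A.mulVec x) (A.mulVec y) = cinner x y := by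
  have h1 : Aᴴ * A = 1 := hA.1
  rw [cinner_eq_dot, cinner_eq_dot, star_mulVec, dotProduct_mulVec, vecMul_vecMul, h1,
    vecMul_one]

lemma cinner_conj {d : ℕ} (v w : Fin d → ℂ) : cinner w v = conj (cinner v w) := by
  simp [cinner, map_sum, mul_comm]

lemma cinner_smul_right {d : ℕ} (v w : Fin d → ℂ) (a : ℂ) :
    cinner v (a • w) = a * cinner v w := by
  simp only [cinner, Pi.smul_apply, smul_eq_mul, Finset.mul_sum]
  exact Finset.sum_congr rfl fun i _ => by ring

/-- Equality case of Cauchy–Schwarz for unit vectors. -/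
lemma parallel_of_cinner {d : ℕ} (x y : Fin d → ℂ) (hx : cinner x x = 1)
    (hy : cinner y y = 1) (h : ‖cinner x y‖ = 1) : y = cinner x y • x := by
  set x' := (WithLp.equiv 2 (Fin d → ℂ)).symm x
  set y' := (WithLp.equiv 2 (Fin d → ℂ)).symm y
  have hx' : (inner ℂ x' x' : ℂ) = 1 := by rw [← cinner_eq_inner]; exact hx
  have hy' : (inner ℂ y' y' : ℂ) = 1 := by rw [← cinner_eq_inner]; exact hy
  have hnx : ‖x'‖ = 1 := by
    have h2 : ‖x'‖ ^ 2 = 1 := by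
      rw [← inner_self_eq_norm_sq (𝕜 := ℂ) x', hx']; simp
    nlinarith [norm_nonneg x']
  have hny : ‖y'‖ = 1 := by
    have h2 : ‖y'‖ ^ 2 = 1 := by
      rw [← inner_self_eq_norm_sq (𝕜 := ℂ) y', hy']; simp
    nlinarith [norm_nonneg y']
  have hx0 : x' ≠ 0 := by intro h0; rw [h0, norm_zero] at hnx; norm_num at hnx
  have hy0 : y' ≠ 0 := by intro h0; rw [h0, norm_zero] at hny; norm_num at hny
  have h' : ‖(inner ℂ x' y' : ℂ)‖ = ‖x'‖ * ‖y'‖ := by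
    rw [hnx, hny, ← cinner_eq_inner, h]; norm_num
  obtain ⟨r, hr0, hr⟩ := (norm_inner_eq_norm_iff hx0 hy0).mp h'
  have hc : cinner x y = r := by
    rw [cinner_eq_inner]
    show (inner ℂ x' y' : ℂ) = r
    rw [hr, inner_smul_right, hx', mul_one]
  rw [hc]
  have : y' = r • x' := hr
  exact congrArg (WithLp.equiv 2 (Fin d → ℂ)) this

/-- The 'classical' alternative of Theorem 2: if every overlap `|⟨ψ, D(g) ψ⟩|` is `0` or
`1`, then the orbit of `ψ` contains an orthonormal basis `D(g_1)ψ, …, D(g_d)ψ` of `ℂ^d`. -/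
theorem classical_alternative (G : Type*) [Group G] [Fintype G] (d : ℕ)
    (D : G → Matrix (Fin d) (Fin d) ℂ)
    (hDunit : ∀ g, D g ∈ Matrix.unitaryGroup (Fin d) ℂ)
    (hDhom : ∀ g h, D (g * h) = D g * D h)
    (hirr : ∀ p : Submodule ℂ (Fin d → ℂ),
      (∀ g, ∀ v ∈ p, (D g).mulVec v ∈ p) → p = ⊥ ∨ p = ⊤)
    (ψ : Fin d → ℂ) (hψ : cinner ψ ψ = 1)
    (hover : ∀ g : G, ‖cinner ψ ((D g).mulVec ψ)‖ = 0 ∨ ‖cinner ψ ((D g).mulVec ψ)‖ = 1) :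
    ∃ gs : Fin d → G, ∀ a b : Fin d,
      cinner ((D (gs a)).mulVec ψ) ((D (gs b)).mulVec ψ) = if a = b then 1 else 0 := by
  classical
  set v : G → (Fin d → ℂ) := fun g => (D g).mulVec ψ with hv
  -- basic facts
  have hdiag : ∀ g, cinner (v g) (v g) = 1 := fun g => by
    rw [hv]; rw [cinner_unitary _ (hDunit g)]; exact hψ
  have hshift : ∀ g h, cinner (v g) (v h) = cinner ψ (v (g⁻¹ * h)) := by
    intro g h
    have : v h = (D g).mulVec (v (g⁻¹ * h)) := by
      simp only [hv, Matrix.mulVec_mulVec, ← hDhom, mul_inv_cancel_left]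
    rw [this, hv]
    exact cinner_unitary _ (hDunit g) _ _
  have hnorm01 : ∀ g h, ‖cinner (v g) (v h)‖ = 0 ∨ ‖cinner (v g) (v h)‖ = 1 := by
    intro g h; rw [hshift]; exact hover _
  have hpar : ∀ g h, cinner (v g) (v h) ≠ 0 → v h = cinner (v g) (v h) • v g := by
    intro g h hne
    refine parallel_of_cinner _ _ (hdiag g) (hdiag h) ?_
    rcases hnorm01 g h with h0 | h1
    · exact absurd (norm_eq_zero.mp h0) hne
    · exact h1
  -- equivalence relation
  have hsymm : ∀ {g h : G}, cinner (v g) (v h) ≠ 0 → cinner (v h) (v g) ≠ 0 := by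
    intro g h hne
    rw [cinner_conj]
    simpa using hne
  let s : Setoid G :=
    ⟨fun g h => cinner (v g) (v h) ≠ 0,
      fun g => by rw [hdiag]; norm_num,
      fun h => hsymm h,
      by
        intro g h k hgh hhk
        have h2 := hpar h k hhk
        show cinner (v g) (v k) ≠ 0
        rw [h2, cinner_smul_right]
        exact mul_ne_zero hhk hgh⟩
  letI : Fintype (Quotient s) := Fintype.ofFinite _
  set w : Quotient s → (Fin d → ℂ) := fun q => v q.out with hw
  have honb : ∀ q q', cinner (w q) (w q') = if q = q' then 1 else 0 := by
    intro q q'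
    by_cases hqq : q = q'
    · simp [hqq, hw, hdiag]
    · simp only [hqq, if_false]
      by_contra hne
      exact hqq (Quotient.out_equiv_out.mp hne)
  -- irreducibility: span of orbit is everything
  have hinv : ∀ g, ∀ u ∈ Submodule.span ℂ (Set.range v),
      (D g).mulVec u ∈ Submodule.span ℂ (Set.range v) := by
    intro g u hu
    have heq : (D g).mulVec u = (D g).mulVecLin u := rfl
    rw [heq]
    have hmap : Submodule.map ((D g).mulVecLin) (Submodule.span ℂ (Set.range v)) ≤
        Submodule.span ℂ (Set.range v) := by
      rw [Submodule.map_span]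
      apply Submodule.span_mono
      rintro _ ⟨_, ⟨h, rfl⟩, rfl⟩
      refine ⟨g * h, ?_⟩
      simp [hv, Matrix.mulVec_mulVec, hDhom]
    exact hmap (Submodule.mem_map_of_mem hu)
  have hspan : Submodule.span ℂ (Set.range v) = ⊤ := by
    rcases hirr (Submodule.span ℂ (Set.range v)) hinv with hbot | htop
    · exfalso
      have h1 : v 1 ∈ Submodule.span ℂ (Set.range v) :=
        Submodule.subset_span ⟨1, rfl⟩
      rw [hbot, Submodule.mem_bot] at h1
      have hd := hdiag 1
      rw [h1] at hd
      simp [cinner] at hd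
    · exact htop
  have hspanw : Submodule.span ℂ (Set.range w) = ⊤ := by
    rw [← top_le_iff, ← hspan, Submodule.span_le]
    rintro _ ⟨g, rfl⟩
    have hrel : cinner (w ⟦g⟧) (v g) ≠ 0 := Quotient.mk_out g
    have := hpar (⟦g⟧ : Quotient s).out g hrel
    rw [this]
    exact Submodule.smul_mem _ _ (Submodule.subset_span ⟨⟦g⟧, rfl⟩)
  -- orthonormality in EuclideanSpace, to count
  set wE : Quotient s → EuclideanSpace ℂ (Fin d) :=
    fun q => (WithLp.equiv 2 (Fin d → ℂ)).symm (w q) with hwE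
  have honbE : Orthonormal ℂ wE := by
    rw [orthonormal_iff_ite]
    intro i j
    rw [← cinner_eq_inner, honb]
  have hcard : Fintype.card (Quotient s) = d := by
    have hle : Fintype.card (Quotient s) ≤ d := by
      have := honbE.linearIndependent.fintype_card_le_finrank
      rwa [finrank_euclideanSpace_fin] at this
    have hge : d ≤ Fintype.card (Quotient s) := by
      have h1 : Submodule.span ℂ (Set.range wE) = ⊤ := by
        have hr : Set.range wE =
            (WithLp.linearEquiv 2 ℂ (Fin d → ℂ)).symm.toLinearMap '' Set.range w := by
          rw [← Set.range_comp]; rfl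
        rw [hr, Submodule.span_image, hspanw, Submodule.map_top, LinearEquiv.range]
      have h2 := finrank_range_le_card (R := ℂ) wE
      rw [Set.finrank, h1, finrank_top, finrank_euclideanSpace_fin] at h2
      exact h2
    omega
  set e : Quotient s ≃ Fin d := Fintype.equivFinOfCardEq hcard with he
  refine ⟨fun a => (e.symm a).out, fun a b => ?_⟩
  have := honb (e.symm a) (e.symm b)
  rw [show cinner ((D ((e.symm a).out)).mulVec ψ) ((D ((e.symm b).out)).mulVec ψ)
      = cinner (w (e.symm a)) (w (e.symm b)) from rfl, this]
  by_cases hab : a = b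
  · simp [hab]
  · have : e.symm a ≠ e.symm b := fun hc => hab (e.symm.injective hc)
    simp [hab, this]
end
end
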